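/- Let A₁₂ = αe₁₂ + βe₂₃ + γe₃₄ and A₂₁ = α₁e₁₂ + β₁e₂₃ + γ₁e₃₄ be 4×4 complex matrices (α, β, γ, α₁, β₁, γ₁ ∈ ℂ). If A₁₂A₂₁ = A₂₁A₁₂ and A₁₂A₂₁ ≠ 0, then there exists a nonzero ε ∈ ℂ with A₂₁ = ε·A₁₂. -/

import Mathlib

/-- The 4×4 matrix unit `e_{ij}` (indices `0,…,3`). -/
def e (i j : Fin 4) : Matrix (Fin 4) (Fin 4) ℂ := Matrix.single i j 1

lemma prod_eq (α β γ α₁ β₁ γ₁ : ℂ) :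
    (α • e 0 1 + β • e 1 2 + γ • e 2 3) * (α₁ • e 0 1 + β₁ • e 1 2 + γ₁ • e 2 3) =
      (α * β₁) • e 0 2 + (β * γ₁) • e 1 3 := by
  ext i j
  fin_cases i <;> fin_cases j <;>
    simp [e, Matrix.mul_apply, Fin.sum_univ_four, Matrix.single, Matrix.of_apply]

/-- if `A₁₂ = αe₁₂ + βe₂₃ + γe₃₄` and
`A₂₁ = α₁e₁₂ + β₁e₂₃ + γ₁e₃₄` commute and their product is nonzero, then
`A₂₁ = ε • A₁₂` for some nonzero `ε`. -/
theorem proportional_of_commuting_case4 (α β γ α₁ β₁ γ₁ : ℂ)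
    (hcomm : (α • e 0 1 + β • e 1 2 + γ • e 2 3) * (α₁ • e 0 1 + β₁ • e 1 2 + γ₁ • e 2 3) =
      (α₁ • e 0 1 + β₁ • e 1 2 + γ₁ • e 2 3) * (α • e 0 1 + β • e 1 2 + γ • e 2 3))
    (hne : (α • e 0 1 + β • e 1 2 + γ • e 2 3) * (α₁ • e 0 1 + β₁ • e 1 2 + γ₁ • e 2 3) ≠ 0) :
    ∃ ε : ℂ, ε ≠ 0 ∧
      α₁ • e 0 1 + β₁ • e 1 2 + γ₁ • e 2 3 = ε • (α • e 0 1 + β • e 1 2 + γ • e 2 3) := by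
  rw [prod_eq] at hcomm hne
  rw [prod_eq] at hcomm
  have h1 : α * β₁ = α₁ * β := by
    have := congrFun (congrFun hcomm 0) 2
    simpa [e, Matrix.single] using this
  have h2 : β * γ₁ = β₁ * γ := by
    have := congrFun (congrFun hcomm 1) 3
    simpa [e, Matrix.single] using this
  have hne' : α * β₁ ≠ 0 ∨ β * γ₁ ≠ 0 := by
    by_contra h
    push_neg at h
    apply hne
    rw [h.1, h.2, zero_smul, zero_smul, add_zero]
  have hβ : β ≠ 0 ∧ β₁ ≠ 0 := by
    rcases hne' with h | h
    · have hβ₁ : β₁ ≠ 0 := right_ne_zero_of_mul h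
      have : α₁ * β ≠ 0 := h1 ▸ h
      exact ⟨right_ne_zero_of_mul this, hβ₁⟩
    · have hβ : β ≠ 0 := left_ne_zero_of_mul h
      have : β₁ * γ ≠ 0 := h2 ▸ h
      exact ⟨hβ, left_ne_zero_of_mul this⟩
  obtain ⟨hβ0, hβ₁0⟩ := hβ
  refine ⟨β₁ / β, div_ne_zero hβ₁0 hβ0, ?_⟩
  have hα : α₁ = (β₁ / β) * α := by field_simp; linear_combination -h1
  have hβe : β₁ = (β₁ / β) * β := by field_simp
  have hγ : γ₁ = (β₁ / β) * γ := by field_simp; linear_combination h2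
  rw [smul_add, smul_add, smul_smul, smul_smul, smul_smul, ← hα, ← hβe, ← hγ]
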